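/- Let H = Quaternion (ZMod 3) be the quaternion algebra over ℤ/3ℤ, and consider the free left H-module H³. Let r₁ = (−3, 1−2i−2k, 0), r₂ = (−1+i+k, 0, −1+i+k), r₃ = (−4i, 3, −3) be the Kishino relation vectors in H³. Then the left submodule Submodule.span H {r₁, r₂, r₃} is a proper submodule of H³ (it is not the whole module). Consequently the quaternionic representation of the biquandle of the Kishino knot, reduced mod 3, is a non-trivial module, so the Kishino knot is non-trivial. -/
import Mathlib


open scoped Quaternion

namespace KishinoMod3

/-- The quaternion unit `i` in `ℍ[ZMod 3]`. -/
def qI : ℍ[ZMod 3] := ⟨0, 1, 0, 0⟩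

/-- The quaternion unit `j` in `ℍ[ZMod 3]`. -/
def qJ : ℍ[ZMod 3] := ⟨0, 0, 1, 0⟩

/-- The quaternion unit `k` in `ℍ[ZMod 3]`. -/
def qK : ℍ[ZMod 3] := ⟨0, 0, 0, 1⟩

/-- First Kishino relation vector `r₁ = (−3, 1−2i−2k, 0)`. -/
def r₁ : Fin 3 → ℍ[ZMod 3] := ![(-3 : ℍ[ZMod 3]), 1 - 2 * qI - 2 * qK, 0]

/-- Second Kishino relation vector `r₂ = (−1+i+k, 0, −1+i+k)`. -/
def r₂ : Fin 3 → ℍ[ZMod 3] := ![-1 + qI + qK, 0, -1 + qI + qK]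

/-- Third Kishino relation vector `r₃ = (−4i, 3, −3)`. -/
def r₃ : Fin 3 → ℍ[ZMod 3] := ![-4 * qI, (3 : ℍ[ZMod 3]), -3]

instance : DecidableEq ℍ[ZMod 3] := fun a b =>
  decidable_of_iff (a.re = b.re ∧ a.imI = b.imI ∧ a.imJ = b.imJ ∧ a.imK = b.imK)
    ⟨fun ⟨h1, h2, h3, h4⟩ => QuaternionAlgebra.ext h1 h2 h3 h4,
     fun h => by subst h; exact ⟨rfl, rfl, rfl, rfl⟩⟩

/-- The annihilator `1 - i - k` of the middle components. -/
def c : ℍ[ZMod 3] := ⟨1, -1, 0, -1⟩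

/-- Left-linear functional `x ↦ x 1 * c` vanishing on all relation vectors. -/
def φ : (Fin 3 → ℍ[ZMod 3]) →ₗ[ℍ[ZMod 3]] ℍ[ZMod 3] where
  toFun x := x 1 * c
  map_add' x y := by simp [add_mul]
  map_smul' a x := by simp [mul_assoc]

lemma h1 : φ r₁ = 0 := by decide
lemma h2 : φ r₂ = 0 := by decide
lemma h3 : φ r₃ = 0 := by decide

/-- The mod-3 quaternionic representation of the biquandle of the Kishino knot is a
non-trivial module: the span of the Kishino relation vectors is a proper submodule
of `ℍ[ZMod 3]³`. Hence the Kishino knot is non-trivial. -/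
theorem kishino_quaternionic_module_mod3_nontrivial :
    Submodule.span ℍ[ZMod 3] ({r₁, r₂, r₃} : Set (Fin 3 → ℍ[ZMod 3])) ≠ ⊤ := by
  intro h
  have hle : Submodule.span ℍ[ZMod 3] ({r₁, r₂, r₃} : Set (Fin 3 → ℍ[ZMod 3])) ≤
      LinearMap.ker φ := by
    rw [Submodule.span_le]
    rintro x (rfl | rfl | rfl) <;> simp [h1, h2, h3]
  rw [h, top_le_iff] at hle
  have := LinearMap.congr_fun (LinearMap.ker_eq_top.mp hle) (Pi.single 1 1)
  revert this
  decide

end KishinoMod3
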